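/- Let φ : X → Y be a continuously differentiable mapping between Banach spaces, A a closed convex cone in Y, and x̄ ∈ φ⁻¹(A). If the Robinson qualification 0 ∈ int(φ(x̄) + ∇φ(x̄)(X) − A) holds, then φ⁻¹(A) has the Shapiro first order contact property at x̄. -/

import Mathlib

open Filter Metric Set Pointwise Topology
open scoped ENNReal

noncomputable section

/-- The Bouligand (contingent) tangent cone of `A` at `u`. -/
def bouligand {X : Type*} [NormedAddCommGroup X] [NormedSpace ℝ X] (A : Set X) (u : X) :
    Set X :=
  {v | ∃ (vs : ℕ → X) (ts : ℕ → ℝ),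
    Tendsto vs atTop (𝓝 v) ∧ Tendsto ts atTop (𝓝 0) ∧ (∀ n, 0 < ts n) ∧
    ∀ n, u + ts n • vs n ∈ A}

/-- The Shapiro first order contact property of `A` at `a`. -/
def shapiro {X : Type*} [NormedAddCommGroup X] [NormedSpace ℝ X] (A : Set X) (a : X) : Prop :=
  ∀ ε > 0, ∃ δ > 0, ∀ x ∈ A ∩ ball a δ, ∀ u ∈ A ∩ ball a δ,
    infDist (x - u) (bouligand A u) ≤ ε * ‖x - u‖

/-- The lower Hadamard directional derivative of `φ` at `x` in direction `h`. -/
def hadamardDeriv {X : Type*} [NormedAddCommGroup X] [NormedSpace ℝ X]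
    (φ : X → EReal) (x h : X) : EReal :=
  liminf (fun p : ℝ × X => (((1 : ℝ) / p.1 : ℝ) : EReal) * (φ (x + p.1 • p.2) - φ x))
    ((𝓝[>] (0 : ℝ)) ×ˢ 𝓝 h)

/-- The epigraph of an `EReal`-valued function, as a subset of `X × ℝ`. -/
def epigraph {X : Type*} (φ : X → EReal) : Set (X × ℝ) := {p | φ p.1 ≤ (p.2 : EReal)}

/-- The Hausdorff-Pompeiu excess of `C` beyond `D`. -/
def excess {X : Type*} [PseudoEMetricSpace X] (C D : Set X) : ℝ≥0∞ :=
  ⨆ c ∈ C, EMetric.infEdist c D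

/-- Metric regularity of `φ` around `xbar` (for `φ xbar`). -/
def metReg {X Y : Type*} [NormedAddCommGroup X] [NormedAddCommGroup Y]
    (φ : X → Y) (xbar : X) : Prop :=
  ∃ κ > (0 : ℝ), ∃ U ∈ 𝓝 xbar, ∃ V ∈ 𝓝 (φ xbar), ∀ x ∈ U, ∀ y ∈ V,
    EMetric.infEdist x (φ ⁻¹' {y}) ≤ ENNReal.ofReal (κ * ‖φ x - y‖)

set_option maxHeartbeats 1600000

section ShapiroAux

set_option linter.unusedSectionVars false

variable {X Y : Type*} [NormedAddCommGroup X] [NormedSpace ℝ X] [CompleteSpace X]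
  [NormedAddCommGroup Y] [NormedSpace ℝ Y] [CompleteSpace Y]

lemma cone_add {A : Set Y} (hAconv : Convex ℝ A)
    (hAcone : ∀ c : ℝ, 0 < c → ∀ a ∈ A, c • a ∈ A)
    {a b : Y} (ha : a ∈ A) (hb : b ∈ A) : a + b ∈ A := by
  have h := hAconv ha hb (by norm_num : (0:ℝ) ≤ 1/2) (by norm_num : (0:ℝ) ≤ 1/2) (by norm_num)
  have h2 := hAcone 2 (by norm_num) _ h
  have : (2:ℝ) • ((1/2:ℝ) • a + (1/2:ℝ) • b) = a + b := by
    rw [smul_add, smul_smul, smul_smul]; norm_num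
  rwa [this] at h2

lemma cone_zero_mem {A : Set Y} (hAcl : IsClosed A)
    (hAcone : ∀ c : ℝ, 0 < c → ∀ a ∈ A, c • a ∈ A)
    {a : Y} (ha : a ∈ A) : (0:Y) ∈ A := by
  have ht : Tendsto (fun n : ℕ => (1 / ((n:ℝ) + 1)) • a) atTop (𝓝 ((0:ℝ) • a)) :=
    tendsto_one_div_add_atTop_nhds_zero_nat.smul_const a
  rw [zero_smul] at ht
  exact hAcl.mem_of_tendsto ht (Eventually.of_forall fun n =>
    hAcone _ (by positivity) _ ha)


lemma cone_smul_nonneg {A : Set Y} (h0 : (0:Y) ∈ A)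
    (hAcone : ∀ c : ℝ, 0 < c → ∀ a ∈ A, c • a ∈ A)
    {c : ℝ} (hc : 0 ≤ c) {a : Y} (ha : a ∈ A) : c • a ∈ A := by
  rcases hc.lt_or_eq with h | h
  · exact hAcone c h a ha
  · rw [← h, zero_smul]; exact h0


/-- The bounded pieces of the Robinson set. -/
private def robSet (D : X →L[ℝ] Y) (bb : Y) (A : Set Y) (M : ℝ) : Set Y :=
  {y | ∃ w s a, ‖w‖ ≤ M ∧ 0 ≤ s ∧ s ≤ M ∧ a ∈ A ∧ y = D w + s • bb - a}

lemma robSet_mono (D : X →L[ℝ] Y) (bb : Y) (A : Set Y) {M M' : ℝ} (h : M ≤ M') :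
    robSet D bb A M ⊆ robSet D bb A M' := by
  rintro y ⟨w, s, a, hw, hs0, hs, ha, rfl⟩
  exact ⟨w, s, a, hw.trans h, hs0, hs.trans h, ha, rfl⟩


lemma stepA (D : X →L[ℝ] Y) (bb : Y) (A : Set Y) (hAconv : Convex ℝ A)
    (hAcone : ∀ c : ℝ, 0 < c → ∀ a ∈ A, c • a ∈ A)
    (hRob : (0 : Y) ∈ interior {y | ∃ u : X, ∃ a ∈ A, y = bb + D u - a}) :
    ∃ M ρ : ℝ, 0 < M ∧ 0 < ρ ∧
      ∀ y : Y, ‖y‖ < ρ → y ∈ closure (robSet D bb A M) := by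
  obtain ⟨ρ₀, hρ₀, hball⟩ := Metric.mem_nhds_iff.mp (mem_interior_iff_mem_nhds.mp hRob)
  -- every point of Y lies in some robSet D bb A n
  have hcov : ∀ y : Y, ∃ n : ℕ, y ∈ robSet D bb A n := by
    intro y
    set c : ℝ := ρ₀ / (2 * (‖y‖ + 1)) with hc
    have hcpos : 0 < c := by positivity
    have hmem : c • y ∈ ball (0:Y) ρ₀ := by
      rw [mem_ball, dist_zero_right, norm_smul, Real.norm_eq_abs, abs_of_pos hcpos]
      calc c * ‖y‖ ≤ c * (‖y‖ + 1) := by nlinarith [norm_nonneg y]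
        _ = ρ₀ / 2 := by
          have h := div_mul_cancel₀ ρ₀ (show (2 * (‖y‖ + 1)) ≠ 0 by positivity)
          rw [← hc] at h; linarith
        _ < ρ₀ := by linarith
    obtain ⟨u, a, ha, hya⟩ := hball hmem
    obtain ⟨n, hn⟩ := exists_nat_ge (max (c⁻¹ * ‖u‖) c⁻¹)
    refine ⟨n, c⁻¹ • u, c⁻¹, c⁻¹ • a, ?_, by positivity, ?_, hAcone _ (by positivity) _ ha, ?_⟩
    · rw [norm_smul, Real.norm_eq_abs, abs_of_pos (by positivity)]
      exact le_trans (le_max_left _ _) hn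
    · exact le_trans (le_max_right _ _) hn
    · have h0 : y = c⁻¹ • (c • y) := by rw [smul_smul, inv_mul_cancel₀ hcpos.ne', one_smul]
      rw [h0, hya, smul_sub, smul_add, map_smul]
      abel
  -- Baire
  have hUnion : (⋃ n : ℕ, closure (robSet D bb A n)) = univ := by
    apply eq_univ_of_forall
    intro y
    obtain ⟨n, hn⟩ := hcov y
    exact mem_iUnion.2 ⟨n, subset_closure hn⟩
  obtain ⟨n₀, hn₀⟩ := nonempty_interior_of_iUnion_of_closed
    (fun n : ℕ => isClosed_closure (s := robSet D bb A n)) hUnion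
  obtain ⟨y₀, hy₀⟩ := hn₀
  obtain ⟨r, hr, hrball⟩ := Metric.isOpen_iff.mp isOpen_interior y₀ hy₀
  have hrball : ball y₀ r ⊆ closure (robSet D bb A n₀) :=
    hrball.trans interior_subset
  obtain ⟨m, hm⟩ := hcov (-y₀)
  refine ⟨n₀ + m + 1, r / 2, by positivity, by positivity, ?_⟩
  intro y hy
  rw [Metric.mem_closure_iff]
  intro ε hε
  have h1 : y₀ + (2:ℝ) • y ∈ ball y₀ r := by
    rw [mem_ball, dist_eq_norm]
    simp only [add_sub_cancel_left, norm_smul, Real.norm_ofNat]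
    linarith
  obtain ⟨c₁, hc₁, hd₁⟩ := Metric.mem_closure_iff.mp (hrball h1) (2 * ε) (by linarith)
  obtain ⟨w₁, s₁, a₁, hw₁, hs₁0, hs₁, ha₁, rfl⟩ := hc₁
  obtain ⟨w₂, s₂, a₂, hw₂, hs₂0, hs₂, ha₂, hy₀eq⟩ := hm
  refine ⟨(2:ℝ)⁻¹ • ((D w₁ + s₁ • bb - a₁) + (D w₂ + s₂ • bb - a₂)),
    ⟨(2:ℝ)⁻¹ • (w₁ + w₂), (2:ℝ)⁻¹ * (s₁ + s₂), (2:ℝ)⁻¹ • (a₁ + a₂), ?_, by positivity, ?_, ?_, ?_⟩, ?_⟩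
  · rw [norm_smul]
    have := norm_add_le w₁ w₂
    simp only [norm_inv, Real.norm_ofNat]
    push_cast
    nlinarith
  · push_cast; nlinarith
  · have h12 : (2:ℝ)⁻¹ • (a₁ + a₂) = (2:ℝ)⁻¹ • a₁ + (2:ℝ)⁻¹ • a₂ := smul_add _ _ _
    rw [h12]
    have := hAconv ha₁ ha₂ (by norm_num : (0:ℝ) ≤ 2⁻¹) (by norm_num : (0:ℝ) ≤ 2⁻¹) (by norm_num)
    convert this using 2 <;> norm_num
  · simp only [map_smul, map_add]
    module
  · have key : y - (2:ℝ)⁻¹ • ((D w₁ + s₁ • bb - a₁) + (D w₂ + s₂ • bb - a₂))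
        = (2:ℝ)⁻¹ • ((y₀ + (2:ℝ) • y) - (D w₁ + s₁ • bb - a₁)) := by
      rw [← hy₀eq]; module
    rw [dist_eq_norm, key, norm_smul]
    simp only [norm_inv, Real.norm_ofNat]
    rw [← dist_eq_norm]
    calc (2:ℝ)⁻¹ * dist (y₀ + (2:ℝ) • y) (D w₁ + s₁ • bb - a₁) < 2⁻¹ * (2*ε) := by
          apply mul_lt_mul_of_pos_left hd₁; norm_num
      _ = ε := by ring

lemma solve (D : X →L[ℝ] Y) (bb : Y) (A : Set Y)
    (hAcl : IsClosed A) (hAconv : Convex ℝ A)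
    (hAcone : ∀ c : ℝ, 0 < c → ∀ a ∈ A, c • a ∈ A) (h0 : (0:Y) ∈ A)
    (M ρ : ℝ) (hM : 0 < M) (hρ : 0 < ρ)
    (hcl : ∀ y : Y, ‖y‖ < ρ → y ∈ closure (robSet D bb A M))
    (D' : X →L[ℝ] Y) (b : Y) (hD' : ‖D' - D‖ ≤ ρ / (16*M)) (hb : ‖b - bb‖ ≤ ρ / (16*M)) :
    ∀ y : Y, ‖y‖ ≤ ρ/2 →
      ∃ w s a, ‖w‖ ≤ 2*M ∧ 0 ≤ s ∧ s ≤ 2*M ∧ a ∈ A ∧ y = D' w + s • b - a := by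
  intro y hy
  set B : ℝ := ‖D‖*M + M*‖bb‖ + ρ with hB
  have hstep : ∀ z : Y, ∃ w s a, ‖w‖ ≤ M ∧ 0 ≤ s ∧ s ≤ M ∧ a ∈ A ∧ ‖a‖ ≤ B ∧
      (‖z‖ ≤ ρ/2 → ‖z - (D' w + s • b - a)‖ ≤ ρ/4) := by
    intro z
    by_cases hz : ‖z‖ ≤ ρ/2
    · obtain ⟨c, hc, hdc⟩ := Metric.mem_closure_iff.mp
        (hcl z (by linarith)) (ρ/16) (by positivity)
      obtain ⟨w, s, a, hw, hs0, hs, ha, rfl⟩ := hc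
      refine ⟨w, s, a, hw, hs0, hs, ha, ?_, fun _ => ?_⟩
      · have h1 : a = D w + s • bb - (D w + s • bb - a) := by abel
        rw [h1]
        have h2 : ‖D w + s • bb - a‖ ≤ ‖z‖ + ρ/16 := by
          have := hdc.le
          rw [dist_eq_norm] at this
          calc ‖D w + s • bb - a‖ = ‖(z - (z - (D w + s • bb - a)))‖ := by abel_nf
            _ ≤ ‖z‖ + ‖z - (D w + s • bb - a)‖ := norm_sub_le _ _
            _ ≤ ‖z‖ + ρ/16 := by linarith
        calc ‖D w + s • bb - (D w + s • bb - a)‖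
            ≤ ‖D w‖ + ‖s • bb‖ + ‖D w + s • bb - a‖ := by
              refine le_trans (norm_sub_le _ _) ?_
              gcongr
              exact norm_add_le _ _
          _ ≤ ‖D‖*M + M*‖bb‖ + ρ := by
              have h3 := D.le_opNorm w
              have h4 : ‖s • bb‖ = s * ‖bb‖ := by
                rw [norm_smul, Real.norm_eq_abs, abs_of_nonneg hs0]
              have h5 : ‖D‖ * ‖w‖ ≤ ‖D‖ * M := by
                apply mul_le_mul_of_nonneg_left hw (norm_nonneg _)
              nlinarith [norm_nonneg bb, norm_nonneg z, norm_nonneg D]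
      · -- error decomposition
        have key : z - (D' w + s • b - a)
            = (z - (D w + s • bb - a)) + ((D - D') w) + s • (bb - b) := by
          simp only [ContinuousLinearMap.sub_apply, smul_sub]
          abel
        rw [key]
        have e1 : ‖(D - D') w‖ ≤ ρ/16 := by
          have h6 := (D - D').le_opNorm w
          have h7 : ‖D - D'‖ ≤ ρ/(16*M) := by rwa [norm_sub_rev]
          calc ‖(D - D') w‖ ≤ ‖D - D'‖ * ‖w‖ := h6
            _ ≤ (ρ/(16*M)) * M := by
                apply mul_le_mul h7 hw (norm_nonneg _) (by positivity)
            _ = ρ/16 := by field_simp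
        have e2 : ‖s • (bb - b)‖ ≤ ρ/16 := by
          rw [norm_smul, Real.norm_eq_abs, abs_of_nonneg hs0]
          calc s * ‖bb - b‖ ≤ M * (ρ/(16*M)) := by
                apply mul_le_mul hs _ (norm_nonneg _) (by positivity)
                rwa [norm_sub_rev]
            _ = ρ/16 := by field_simp
        have e0 : ‖z - (D w + s • bb - a)‖ ≤ ρ/16 := by
          rw [← dist_eq_norm]; exact hdc.le
        calc ‖z - (D w + s • bb - a) + (D - D') w + s • (bb - b)‖
            ≤ ‖z - (D w + s • bb - a)‖ + ‖(D - D') w‖ + ‖s • (bb - b)‖ := by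
              refine le_trans (norm_add_le _ _) ?_
              gcongr
              exact norm_add_le _ _
          _ ≤ ρ/16 + ρ/16 + ρ/16 := by gcongr
          _ ≤ ρ/4 := by linarith
    · exact ⟨0, 0, 0, by simp [hM.le], le_refl 0, hM.le, h0, by simp [hB]; positivity,
        fun h => absurd h hz⟩
  choose fw fs fa hfw hfs0 hfs hfaA hfaB hfstep using hstep
  -- the residual sequence
  let g : Y → Y := fun z => D' (fw z) + fs z • b - fa z
  let zs : ℕ → Y := fun k => Nat.rec y (fun k zk => zk - ((2:ℝ)⁻¹)^k • g ((2:ℝ)^k • zk)) k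
  have hzs0 : zs 0 = y := rfl
  have hzssucc : ∀ k, zs (k+1) = zs k - ((2:ℝ)⁻¹)^k • g ((2:ℝ)^k • zs k) := fun k => rfl
  have hpow : ∀ k : ℕ, ((2:ℝ)⁻¹)^k * (2:ℝ)^k = 1 := by
    intro k
    rw [← mul_pow]
    norm_num
  have hsplit : ∀ (z G : Y) (k : ℕ), z - ((2:ℝ)⁻¹)^k • G = ((2:ℝ)⁻¹)^k • ((2:ℝ)^k • z - G) := by
    intro z G k
    rw [smul_sub, smul_smul, hpow k, one_smul]
  have hinv : ∀ k, ‖zs k‖ ≤ (ρ/2) * ((2:ℝ)⁻¹)^k := by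
    intro k
    induction k with
    | zero => simpa [hzs0] using hy
    | succ k ih =>
      have hk : ‖(2:ℝ)^k • zs k‖ ≤ ρ/2 := by
        rw [norm_smul, Real.norm_eq_abs, abs_of_pos (by positivity)]
        calc (2:ℝ)^k * ‖zs k‖ ≤ (2:ℝ)^k * ((ρ/2) * ((2:ℝ)⁻¹)^k) := by
              apply mul_le_mul_of_nonneg_left ih (by positivity)
          _ = ρ/2 := by
              rw [show (2:ℝ)^k * ((ρ/2) * ((2:ℝ)⁻¹)^k) = (((2:ℝ)⁻¹)^k * (2:ℝ)^k) * (ρ/2) from by ring,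
                hpow k, one_mul]
      have hstepk := hfstep ((2:ℝ)^k • zs k) hk
      have heq : zs (k+1) = ((2:ℝ)⁻¹)^k • ((2:ℝ)^k • zs k - g ((2:ℝ)^k • zs k)) := by
        rw [hzssucc k, hsplit]
      rw [heq, norm_smul, Real.norm_eq_abs, abs_of_pos (by positivity)]
      calc ((2:ℝ)⁻¹)^k * ‖(2:ℝ)^k • zs k - g ((2:ℝ)^k • zs k)‖
          ≤ ((2:ℝ)⁻¹)^k * (ρ/4) := by
            apply mul_le_mul_of_nonneg_left hstepk (by positivity)
        _ ≤ (ρ/2) * ((2:ℝ)⁻¹)^(k+1) := by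
            rw [pow_succ]
            nlinarith [pow_pos (show (0:ℝ) < 2⁻¹ by norm_num) k]
  -- the component series
  set wk : ℕ → X := fun k => ((2:ℝ)⁻¹)^k • fw ((2:ℝ)^k • zs k) with hwk
  set sk : ℕ → ℝ := fun k => ((2:ℝ)⁻¹)^k * fs ((2:ℝ)^k • zs k) with hsk
  set ak : ℕ → Y := fun k => ((2:ℝ)⁻¹)^k • fa ((2:ℝ)^k • zs k) with hak
  have hgeo : Summable (fun k : ℕ => ((2:ℝ)⁻¹)^k) :=
    summable_geometric_of_lt_one (by norm_num) (by norm_num)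
  have hwkb : ∀ k, ‖wk k‖ ≤ M * ((2:ℝ)⁻¹)^k := by
    intro k
    rw [hwk, norm_smul, Real.norm_eq_abs, abs_of_pos (by positivity)]
    calc ((2:ℝ)⁻¹)^k * ‖fw ((2:ℝ)^k • zs k)‖ ≤ ((2:ℝ)⁻¹)^k * M :=
          mul_le_mul_of_nonneg_left (hfw _) (by positivity)
      _ = M * ((2:ℝ)⁻¹)^k := by ring
  have hskb : ∀ k, ‖sk k‖ ≤ M * ((2:ℝ)⁻¹)^k := by
    intro k
    rw [hsk, Real.norm_eq_abs, abs_mul, abs_of_pos (show (0:ℝ) < ((2:ℝ)⁻¹)^k by positivity),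
      abs_of_nonneg (hfs0 _)]
    calc ((2:ℝ)⁻¹)^k * fs ((2:ℝ)^k • zs k) ≤ ((2:ℝ)⁻¹)^k * M :=
          mul_le_mul_of_nonneg_left (hfs _) (by positivity)
      _ = M * ((2:ℝ)⁻¹)^k := by ring
  have hakb : ∀ k, ‖ak k‖ ≤ B * ((2:ℝ)⁻¹)^k := by
    intro k
    rw [hak, norm_smul, Real.norm_eq_abs, abs_of_pos (by positivity)]
    calc ((2:ℝ)⁻¹)^k * ‖fa ((2:ℝ)^k • zs k)‖ ≤ ((2:ℝ)⁻¹)^k * B :=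
          mul_le_mul_of_nonneg_left (hfaB _) (by positivity)
      _ = B * ((2:ℝ)⁻¹)^k := by ring
  have hswn : Summable (fun k => ‖wk k‖) :=
    Summable.of_nonneg_of_le (fun k => norm_nonneg _) hwkb (hgeo.mul_left M)
  have hsw : Summable wk := Summable.of_norm_bounded (hgeo.mul_left M) hwkb
  have hss : Summable sk := Summable.of_norm_bounded (hgeo.mul_left M) hskb
  have hsa : Summable ak := Summable.of_norm_bounded (hgeo.mul_left B) hakb
  refine ⟨∑' k, wk k, ∑' k, sk k, ∑' k, ak k, ?_, ?_, ?_, ?_, ?_⟩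
  · have h1 : ∑' k, ‖wk k‖ ≤ ∑' k, M * ((2:ℝ)⁻¹)^k :=
      Summable.tsum_le_tsum hwkb hswn (hgeo.mul_left M)
    have h2 : ∑' (k:ℕ), M * ((2:ℝ)⁻¹)^k = M * 2 := by
      rw [tsum_mul_left, tsum_geometric_of_lt_one (by norm_num) (by norm_num)]
      norm_num
    calc ‖∑' k, wk k‖ ≤ ∑' k, ‖wk k‖ := norm_tsum_le_tsum_norm hswn
      _ ≤ M * 2 := by rw [← h2]; exact h1
      _ = 2 * M := by ring
  · exact tsum_nonneg fun k => mul_nonneg (by positivity) (hfs0 _)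
  · have h1 : ∑' k, sk k ≤ ∑' k, M * ((2:ℝ)⁻¹)^k := by
      apply Summable.tsum_le_tsum _ hss (hgeo.mul_left M)
      intro k
      calc sk k ≤ ‖sk k‖ := le_abs_self _
        _ ≤ M * ((2:ℝ)⁻¹)^k := hskb k
    have h2 : ∑' (k:ℕ), M * ((2:ℝ)⁻¹)^k = M * 2 := by
      rw [tsum_mul_left, tsum_geometric_of_lt_one (by norm_num) (by norm_num)]
      norm_num
    linarith [h1, h2.symm ▸ h1]
  · -- a ∈ A
    have hpartial : ∀ n, (∑ k ∈ Finset.range n, ak k) ∈ A := by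
      intro n
      induction n with
      | zero => simpa using h0
      | succ n ih =>
        rw [Finset.sum_range_succ]
        exact cone_add hAconv hAcone ih
          (cone_smul_nonneg h0 hAcone (by positivity) (hfaA _))
    exact hAcl.mem_of_tendsto hsa.hasSum.tendsto_sum_nat
      (Eventually.of_forall hpartial)
  · -- the identity, via limits of partial sums
    have hiden : ∀ n, y - zs n = D' (∑ k ∈ Finset.range n, wk k)
        + (∑ k ∈ Finset.range n, sk k) • b - (∑ k ∈ Finset.range n, ak k) := by
      intro n
      induction n with
      | zero => simp [hzs0]
      | succ n ih =>
        rw [Finset.sum_range_succ, Finset.sum_range_succ, Finset.sum_range_succ,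
          hzssucc n, map_add, add_smul]
        have hexp : ((2:ℝ)⁻¹)^n • g ((2:ℝ)^n • zs n)
            = D' (wk n) + (sk n) • b - ak n := by
          show ((2:ℝ)⁻¹)^n • (D' (fw ((2:ℝ)^n • zs n)) + fs ((2:ℝ)^n • zs n) • b
            - fa ((2:ℝ)^n • zs n)) = _
          rw [smul_sub, smul_add, map_smul, smul_smul]
        have : y - (zs n - ((2:ℝ)⁻¹)^n • g ((2:ℝ)^n • zs n))
            = (y - zs n) + ((2:ℝ)⁻¹)^n • g ((2:ℝ)^n • zs n) := by abel
        rw [this, ih, hexp]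
        abel
    have hz0 : Tendsto zs atTop (𝓝 0) := by
      apply squeeze_zero_norm (fun n => hinv n)
      have := tendsto_pow_atTop_nhds_zero_of_lt_one
        (show (0:ℝ) ≤ 2⁻¹ by norm_num) (show (2:ℝ)⁻¹ < 1 by norm_num)
      simpa using this.const_mul (ρ/2)
    have hLHS : Tendsto (fun n => y - zs n) atTop (𝓝 y) := by
      have := (tendsto_const_nhds (x := y) (f := atTop)).sub hz0
      simpa using this
    have hRHS : Tendsto (fun n => D' (∑ k ∈ Finset.range n, wk k)
        + (∑ k ∈ Finset.range n, sk k) • b - (∑ k ∈ Finset.range n, ak k)) atTop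
        (𝓝 (D' (∑' k, wk k) + (∑' k, sk k) • b - ∑' k, ak k)) := by
      refine Tendsto.sub (Tendsto.add ?_ ?_) ?_
      · exact (D'.continuous.tendsto _).comp hsw.hasSum.tendsto_sum_nat
      · exact (hss.hasSum.tendsto_sum_nat).smul_const b
      · exact hsa.hasSum.tendsto_sum_nat
    have := hLHS.congr (fun n => hiden n)
    exact tendsto_nhds_unique this hRHS

lemma mvt_unif (φ : X → Y) (hφ : ContDiff ℝ 1 φ) (xbar : X) {η : ℝ} (hη : 0 < η) :
    ∃ δ > 0, ∀ p q : X, dist p xbar < δ → dist q xbar < δ →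
      ‖φ q - φ p - fderiv ℝ φ p (q - p)‖ ≤ η * ‖q - p‖ := by
  have hc : ContinuousAt (fderiv ℝ φ) xbar := (hφ.continuous_fderiv one_ne_zero).continuousAt
  rw [Metric.continuousAt_iff] at hc
  obtain ⟨δ, hδ, hball⟩ := hc (η/2) (by positivity)
  refine ⟨δ, hδ, fun p q hp hq => ?_⟩
  have hdiff : ∀ x ∈ ball xbar δ,
      HasFDerivWithinAt (fun x => φ x - fderiv ℝ φ p x)
        (fderiv ℝ φ x - fderiv ℝ φ p) (ball xbar δ) x := fun x _ =>
    (((hφ.differentiable one_ne_zero) x).hasFDerivAt.sub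
      ((fderiv ℝ φ p).hasFDerivAt)).hasFDerivWithinAt
  have hbound : ∀ x ∈ ball xbar δ, ‖fderiv ℝ φ x - fderiv ℝ φ p‖ ≤ η := by
    intro x hx
    have h1 := hball (mem_ball.mp hx)
    have h2 := hball (mem_ball.mp (mem_ball.mpr hp))
    rw [dist_eq_norm] at h1 h2
    calc ‖fderiv ℝ φ x - fderiv ℝ φ p‖
        = ‖(fderiv ℝ φ x - fderiv ℝ φ xbar) - (fderiv ℝ φ p - fderiv ℝ φ xbar)‖ := by abel_nf
      _ ≤ ‖fderiv ℝ φ x - fderiv ℝ φ xbar‖ + ‖fderiv ℝ φ p - fderiv ℝ φ xbar‖ := norm_sub_le _ _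
      _ ≤ η/2 + η/2 := by exact add_le_add h1.le h2.le
      _ = η := by ring
  have := Convex.norm_image_sub_le_of_norm_hasFDerivWithin_le hdiff hbound
    (convex_ball xbar δ) (mem_ball.mpr hp) (mem_ball.mpr hq)
  calc ‖φ q - φ p - fderiv ℝ φ p (q - p)‖
      = ‖(φ q - fderiv ℝ φ p q) - (φ p - fderiv ℝ φ p p)‖ := by
        rw [map_sub]; abel_nf
    _ ≤ η * ‖q - p‖ := this

private def newtonSeq (φ : X → Y) (Dφ : X → X →L[ℝ] Y) (fw : X → Y → X) (p₀ : X) (y₀ : Y) :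
    ℕ → X × Y
  | 0 => (p₀, y₀)
  | (n+1) =>
    let pq := newtonSeq φ Dφ fw p₀ y₀ n
    (pq.1 + fw pq.1 pq.2,
      -(φ (pq.1 + fw pq.1 pq.2) - φ pq.1 - Dφ pq.1 (fw pq.1 pq.2)))


lemma newton (φ : X → Y) (hφ : ContDiff ℝ 1 φ) (A : Set Y)
    (hAcl : IsClosed A) (hAconv : Convex ℝ A)
    (hAcone : ∀ c : ℝ, 0 < c → ∀ a ∈ A, c • a ∈ A) (h0 : (0:Y) ∈ A)
    (xbar : X) (K δ₁ c₀ δ₂ : ℝ) (hK : 0 < K) (hδ₁ : 0 < δ₁) (hδ₂ : 0 < δ₂)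
    (hsolve : ∀ p : X, dist p xbar < δ₁ → ∀ b : Y, ‖b - φ xbar‖ ≤ c₀ → ∀ y : Y,
      ∃ w s a, ‖w‖ ≤ K*‖y‖ ∧ 0 ≤ s ∧ s ≤ K*‖y‖ ∧ a ∈ A ∧ y = fderiv ℝ φ p w + s • b - a)
    (hmvt : ∀ p q : X, dist p xbar < δ₂ → dist q xbar < δ₂ →
      ‖φ q - φ p - fderiv ℝ φ p (q - p)‖ ≤ (2*K)⁻¹ * ‖q - p‖)
    (u : X) (hu : u ∈ φ ⁻¹' A) (hud : dist u xbar < min δ₁ δ₂ / 2)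
    (hub : ‖φ u - φ xbar‖ ≤ c₀)
    (w : X) (t₀ : ℝ) (ht₀ : 0 < t₀)
    (hz : ∀ t : ℝ, 0 < t → t ≤ t₀ →
      φ u + t • (fderiv ℝ φ u w) - (2⁻¹:ℝ) • φ u ∈ A) :
    w ∈ bouligand (φ ⁻¹' A) u := by
  set δN : ℝ := min δ₁ δ₂ with hδN
  have hδN0 : 0 < δN := lt_min hδ₁ hδ₂
  set z : Y := fderiv ℝ φ u w with hzdef
  -- totalized solver with b = φ u
  have hsolve' : ∀ (p : X) (y : Y), ∃ w' s a, ‖w'‖ ≤ K*‖y‖ ∧ 0 ≤ s ∧ s ≤ K*‖y‖ ∧ a ∈ A ∧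
      (dist p xbar < δ₁ → y = fderiv ℝ φ p w' + s • (φ u) - a) := by
    intro p y
    by_cases hp : dist p xbar < δ₁
    · obtain ⟨w', s, a, h1, h2, h3, h4, h5⟩ := hsolve p hp (φ u) hub y
      exact ⟨w', s, a, h1, h2, h3, h4, fun _ => h5⟩
    · exact ⟨0, 0, 0, by simp; positivity, le_refl 0, by positivity, h0, fun h => absurd h hp⟩
  choose fw fs fa hwK hs0 hsK haA hiden using hsolve'
  -- main fixed-t claim
  have hmain : ∀ t : ℝ, 0 < t → t ≤ t₀ → t * ‖w‖ ≤ δN/8 →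
      2*K*‖φ (u + t • w) - φ u - t • z‖ ≤ δN/8 →
      K*‖φ (u + t • w) - φ u - t • z‖ ≤ 4⁻¹ →
      ∃ p ∈ φ ⁻¹' A, ‖p - (u + t • w)‖ ≤ 2*K*‖φ (u + t • w) - φ u - t • z‖ := by
    intro t ht ht0 htw hε1 hε2
    set εt : ℝ := ‖φ (u + t • w) - φ u - t • z‖ with hεt
    have hεt0 : 0 ≤ εt := norm_nonneg _
    -- the Newton sequence
    set ps : ℕ → X := fun n =>
      (newtonSeq φ (fderiv ℝ φ) fw (u + t • w) ((φ u + t • z) - φ (u + t • w)) n).1 with hps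
    set ys : ℕ → Y := fun n =>
      (newtonSeq φ (fderiv ℝ φ) fw (u + t • w) ((φ u + t • z) - φ (u + t • w)) n).2 with hys
    have hps0 : ps 0 = u + t • w := by simp [hps, newtonSeq]
    have hys0 : ys 0 = (φ u + t • z) - φ (u + t • w) := by simp [hys, newtonSeq]
    have hpss : ∀ n, ps (n+1) = ps n + fw (ps n) (ys n) := by
      intro n; simp [hps, hys, newtonSeq]
    have hyss : ∀ n, ys (n+1)
        = -(φ (ps (n+1)) - φ (ps n) - fderiv ℝ φ (ps n) (fw (ps n) (ys n))) := by
      intro n; simp [hps, hys, newtonSeq]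
    have hεt0' : ‖ys 0‖ = εt := by rw [hys0, hεt, norm_sub_rev]; congr 1; abel
    have hb₀ : φ u + t • z - (2⁻¹:ℝ) • φ u ∈ A := hz t ht ht0
    -- invariant
    have hR : ∀ n, ‖ys n‖ ≤ εt * (2⁻¹:ℝ)^n ∧
        dist (ps n) (ps 0) ≤ 2*K*εt*(1 - (2⁻¹:ℝ)^n) ∧
        ∃ c γ, 2*K*εt*((2⁻¹:ℝ)^n) ≤ c ∧ γ ∈ A ∧
          φ (ps n) + ys n = (φ u + t • z - (2⁻¹:ℝ) • φ u) + c • φ u + γ := by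
      intro n
      induction n with
      | zero =>
        refine ⟨by rw [hεt0']; simp, by simp, 2⁻¹, 0, ?_, h0, ?_⟩
        · rw [pow_zero, mul_one]; linarith
        · rw [hps0, hys0]; module
      | succ n ih =>
        obtain ⟨ihy, ihp, c, γ, hc, hγ, hiden3⟩ := ih
        have hpow0 : (0:ℝ) < (2⁻¹:ℝ)^n := by positivity
        have hdpsn : dist (ps n) xbar < δN := by
          have h1 : dist (ps 0) u = t * ‖w‖ := by
            rw [hps0, dist_eq_norm]
            simp [norm_smul, abs_of_pos ht]
          have h2 : dist (ps n) xbar ≤ dist (ps n) (ps 0) + dist (ps 0) u + dist u xbar :=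
            dist_triangle4 _ _ _ _
          have hprod : 0 ≤ 2*K*εt*(2⁻¹:ℝ)^n := by positivity
          have h3 : 2*K*εt*(1 - (2⁻¹:ℝ)^n) ≤ 2*K*εt := by nlinarith [hprod]
          have h4 : dist u xbar < δN / 2 := hud
          have h5 : dist (ps 0) u ≤ δN/8 := by rw [h1]; exact htw
          linarith
        have hqn : ‖fw (ps n) (ys n)‖ ≤ K * ‖ys n‖ := hwK _ _
        have hpsucc : dist (ps (n+1)) (ps 0) ≤ 2*K*εt*(1 - (2⁻¹:ℝ)^(n+1)) := by
          have h5 : dist (ps (n+1)) (ps 0) ≤ dist (ps (n+1)) (ps n) + dist (ps n) (ps 0) :=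
            dist_triangle _ _ _
          have h6 : dist (ps (n+1)) (ps n) = ‖fw (ps n) (ys n)‖ := by
            rw [hpss n, dist_eq_norm]; congr 1; abel
          have h7 : K * ‖ys n‖ ≤ K * (εt * (2⁻¹:ℝ)^n) :=
            mul_le_mul_of_nonneg_left ihy hK.le
          rw [pow_succ]
          nlinarith
        have hdpsn1 : dist (ps (n+1)) xbar < δN := by
          have h1 : dist (ps 0) u = t * ‖w‖ := by
            rw [hps0, dist_eq_norm]
            simp [norm_smul, abs_of_pos ht]
          have h2 : dist (ps (n+1)) xbar ≤ dist (ps (n+1)) (ps 0) + dist (ps 0) u + dist u xbar :=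
            dist_triangle4 _ _ _ _
          have hprod : 0 ≤ 2*K*εt*(2⁻¹:ℝ)^(n+1) := by positivity
          have h3 : 2*K*εt*(1 - (2⁻¹:ℝ)^(n+1)) ≤ 2*K*εt := by nlinarith [hprod]
          have h4 : dist u xbar < δN / 2 := hud
          have h5 : dist (ps 0) u ≤ δN/8 := by rw [h1]; exact htw
          linarith
        have hynorm : ‖ys (n+1)‖ ≤ εt * (2⁻¹:ℝ)^(n+1) := by
          rw [hyss n, norm_neg]
          have h8 : ps (n+1) - ps n = fw (ps n) (ys n) := by rw [hpss n]; abel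
          have h9 := hmvt (ps n) (ps (n+1))
            (lt_of_lt_of_le hdpsn (min_le_right _ _))
            (lt_of_lt_of_le hdpsn1 (min_le_right _ _))
          rw [h8] at h9
          calc ‖φ (ps (n+1)) - φ (ps n) - fderiv ℝ φ (ps n) (fw (ps n) (ys n))‖
              ≤ (2*K)⁻¹ * ‖fw (ps n) (ys n)‖ := h9
            _ ≤ (2*K)⁻¹ * (K * ‖ys n‖) := by
                apply mul_le_mul_of_nonneg_left hqn (by positivity)
            _ = 2⁻¹ * ‖ys n‖ := by field_simp
            _ ≤ 2⁻¹ * (εt * (2⁻¹:ℝ)^n) := by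
                apply mul_le_mul_of_nonneg_left ihy (by norm_num)
            _ = εt * (2⁻¹:ℝ)^(n+1) := by rw [pow_succ]; ring
        refine ⟨hynorm, hpsucc, c - fs (ps n) (ys n), γ + fa (ps n) (ys n), ?_, 
          cone_add hAconv hAcone hγ (haA _ _), ?_⟩
        · have h10 : fs (ps n) (ys n) ≤ K * ‖ys n‖ := hsK _ _
          have h7 : K * ‖ys n‖ ≤ K * (εt * (2⁻¹:ℝ)^n) :=
            mul_le_mul_of_nonneg_left ihy hK.le
          rw [pow_succ]
          nlinarith
        · -- the representation identity
          have hid := hiden (ps n) (ys n) (lt_of_lt_of_le hdpsn (min_le_left _ _))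
          have hkey : φ (ps (n+1)) + ys (n+1)
              = φ (ps n) + fderiv ℝ φ (ps n) (fw (ps n) (ys n)) := by
            rw [hyss n]; abel
          rw [hkey]
          have h2 : ys n - fs (ps n) (ys n) • φ u + fa (ps n) (ys n)
              = fderiv ℝ φ (ps n) (fw (ps n) (ys n)) := by
            nth_rewrite 1 [hid]
            abel
          rw [← h2]
          calc φ (ps n) + (ys n - fs (ps n) (ys n) • φ u + fa (ps n) (ys n))
              = (φ (ps n) + ys n) - fs (ps n) (ys n) • φ u + fa (ps n) (ys n) := by abel
            _ = ((φ u + t • z - (2⁻¹:ℝ) • φ u) + c • φ u + γ)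
                - fs (ps n) (ys n) • φ u + fa (ps n) (ys n) := by rw [hiden3]
            _ = (φ u + t • z - (2⁻¹:ℝ) • φ u) + (c - fs (ps n) (ys n)) • φ u
                + (γ + fa (ps n) (ys n)) := by rw [sub_smul]; abel
    -- convergence
    have hcauchy : CauchySeq ps := by
      apply cauchySeq_of_le_geometric (2⁻¹:ℝ) (K*εt) (by norm_num)
      intro n
      have h6 : dist (ps n) (ps (n+1)) = ‖fw (ps n) (ys n)‖ := by
        rw [hpss n, dist_eq_norm]
        rw [norm_sub_rev]; congr 1; abel
      rw [h6]
      calc ‖fw (ps n) (ys n)‖ ≤ K * ‖ys n‖ := hwK _ _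
        _ ≤ K * (εt * (2⁻¹:ℝ)^n) := mul_le_mul_of_nonneg_left (hR n).1 hK.le
        _ = K * εt * (2⁻¹:ℝ)^n := by ring
    obtain ⟨p, hp⟩ := cauchySeq_tendsto_of_complete hcauchy
    have hys0' : Tendsto ys atTop (𝓝 0) := by
      apply squeeze_zero_norm (fun n => (hR n).1)
      have := tendsto_pow_atTop_nhds_zero_of_lt_one
        (show (0:ℝ) ≤ 2⁻¹ by norm_num) (show (2⁻¹:ℝ) < 1 by norm_num)
      simpa using this.const_mul εt
    refine ⟨p, ?_, ?_⟩
    · -- φ p ∈ A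
      have hmem : ∀ n, φ (ps n) + ys n ∈ A := by
        intro n
        obtain ⟨-, -, c, γ, hc, hγ, hiden3⟩ := hR n
        rw [hiden3]
        have hc0 : 0 ≤ c := le_trans (by positivity) hc
        exact cone_add hAconv hAcone
          (cone_add hAconv hAcone hb₀ (cone_smul_nonneg h0 hAcone hc0 hu)) hγ
      have htend : Tendsto (fun n => φ (ps n) + ys n) atTop (𝓝 (φ p)) := by
        have h1 : Tendsto (fun n => φ (ps n)) atTop (𝓝 (φ p)) :=
          ((hφ.continuous).continuousAt.tendsto).comp hp
        simpa using h1.add hys0'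
      exact hAcl.mem_of_tendsto htend (Eventually.of_forall hmem)
    · -- distance bound
      have h1 : Tendsto (fun n => dist (ps n) (ps 0)) atTop (𝓝 (dist p (ps 0))) :=
        (hp.dist tendsto_const_nhds)
      have h2 : ∀ n, dist (ps n) (ps 0) ≤ 2*K*εt := by
        intro n
        have := (hR n).2.1
        have hprod : 0 ≤ 2*K*εt*(2⁻¹:ℝ)^n := by positivity
        nlinarith [hprod]
      have h3 := le_of_tendsto h1 (Eventually.of_forall h2)
      rw [hps0] at h3
      rw [← dist_eq_norm]
      exact h3
  -- derivative of t ↦ φ(u + t w) at 0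
  set E : ℝ → ℝ := fun s => ‖φ (u + s • w) - φ u - s • z‖ with hE
  have hder : HasFDerivAt φ (fderiv ℝ φ u) u := ((hφ.differentiable one_ne_zero) u).hasFDerivAt
  have hL : HasDerivAt (fun s : ℝ => u + s • w) w 0 := by
    simpa using ((hasDerivAt_id (0:ℝ)).smul_const w).const_add u
  have h0L : u + (0:ℝ) • w = u := by simp
  have hder' : HasFDerivAt φ (fderiv ℝ φ u) (u + (0:ℝ) • w) := by rwa [h0L]
  have hψ : HasDerivAt (fun s : ℝ => φ (u + s • w)) z 0 := by
    have := hder'.comp_hasDerivAt (0:ℝ) hL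
    exact this
  have hslope : Tendsto (slope (fun s : ℝ => φ (u + s • w)) 0) (𝓝[≠] (0:ℝ)) (𝓝 z) :=
    hasDerivAt_iff_tendsto_slope.mp hψ
  -- continuity of the error
  have hc1 : Continuous (fun s : ℝ => φ (u + s • w) - φ u - s • z) := by
    refine Continuous.sub (Continuous.sub ?_ continuous_const) ?_
    · exact hφ.continuous.comp (by continuity)
    · exact continuous_id.smul continuous_const
  have hcE : ContinuousAt E 0 := (hc1.norm).continuousAt
  have hE0 : E 0 = 0 := by simp [hE]
  set cstar : ℝ := min (δN/(16*K)) ((4*K)⁻¹) with hcstar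
  have hcstar0 : 0 < cstar := by
    apply lt_min <;> positivity
  obtain ⟨T₂, hT₂, hT₂p⟩ := Metric.continuousAt_iff.mp hcE cstar hcstar0
  set T : ℝ := min (min (T₂/2) t₀) (δN/(8*(‖w‖+1))) with hT
  have hT0 : 0 < T := by
    refine lt_min (lt_min (by linarith) ht₀) (div_pos hδN0 (by positivity))
  have hEsmall : ∀ s : ℝ, 0 < s → s ≤ T → E s < cstar := by
    intro s hs hsT
    have h1 : dist s 0 < T₂ := by
      rw [Real.dist_eq, sub_zero, abs_of_pos hs]
      have : T ≤ T₂/2 := le_trans (min_le_left _ _) (min_le_left _ _)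
      linarith
    have := hT₂p h1
    rw [hE0, Real.dist_eq, sub_zero] at this
    calc E s ≤ |E s| := le_abs_self _
      _ < cstar := this
  have hcond : ∀ s : ℝ, 0 < s → s ≤ T →
      ∃ p ∈ φ ⁻¹' A, ‖p - (u + s • w)‖ ≤ 2*K*E s := by
    intro s hs hsT
    apply hmain s hs (hsT.trans (le_trans (min_le_left _ _) (min_le_right _ _)))
    · -- s * ‖w‖ ≤ δN/8
      have h1 : s ≤ δN/(8*(‖w‖+1)) := hsT.trans (min_le_right _ _)
      have h2 : s * ‖w‖ ≤ s * (‖w‖+1) := by nlinarith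
      have h3 : s * (‖w‖+1) ≤ δN/8 := by
        rw [div_mul_eq_div_div] at h1
        have hw1 : (0:ℝ) < ‖w‖ + 1 := by positivity
        calc s * (‖w‖+1) ≤ (δN/8/(‖w‖+1)) * (‖w‖+1) := by
              apply mul_le_mul_of_nonneg_right h1 hw1.le
          _ = δN/8 := by field_simp
      linarith
    · have := hEsmall s hs hsT
      have h4 : E s ≤ δN/(16*K) := le_trans this.le (min_le_left _ _)
      calc 2*K*E s ≤ 2*K*(δN/(16*K)) := by
            apply mul_le_mul_of_nonneg_left h4 (by positivity)
        _ = δN/8 := by field_simp; ring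
    · have := hEsmall s hs hsT
      have h4 : E s ≤ (4*K)⁻¹ := le_trans this.le (min_le_right _ _)
      calc K*E s ≤ K*(4*K)⁻¹ := by
            apply mul_le_mul_of_nonneg_left h4 hK.le
        _ = 4⁻¹ := by field_simp
  -- the sequences
  set ts : ℕ → ℝ := fun n => T / (n+1) with hts
  have hts0 : ∀ n, 0 < ts n := fun n => by positivity
  have htsT : ∀ n, ts n ≤ T := by
    intro n
    rw [hts]
    apply div_le_self hT0.le
    push_cast
    linarith [Nat.cast_nonneg (α := ℝ) n]
  have htsten : Tendsto ts atTop (𝓝 0) := by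
    have h1 : Tendsto (fun n : ℕ => T * (1/((n:ℝ)+1))) atTop (𝓝 (T * 0)) :=
      tendsto_one_div_add_atTop_nhds_zero_nat.const_mul T
    rw [mul_zero] at h1
    apply h1.congr
    intro n
    rw [hts]
    ring
  choose ps' hps'A hps'b using fun n => hcond (ts n) (hts0 n) (htsT n)
  refine ⟨fun n => (ts n)⁻¹ • (ps' n - u), ts, ?_, htsten, hts0, ?_⟩
  · -- tendsto
    have hslopen : Tendsto (fun n => slope (fun s : ℝ => φ (u + s • w)) 0 (ts n)) atTop (𝓝 z) := by
      apply hslope.comp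
      rw [tendsto_nhdsWithin_iff]
      exact ⟨htsten, Eventually.of_forall fun n => (hts0 n).ne'⟩
    have hbnd : ∀ n, dist ((ts n)⁻¹ • (ps' n - u)) w
        ≤ 2*K * dist (slope (fun s : ℝ => φ (u + s • w)) 0 (ts n)) z := by
      intro n
      have htn := hts0 n
      have hslope_eq : slope (fun s : ℝ => φ (u + s • w)) 0 (ts n) - z
          = (ts n)⁻¹ • (φ (u + ts n • w) - φ u - ts n • z) := by
        rw [slope_def_module, sub_zero, h0L]
        match_scalars <;> field_simp
      have h5 : dist ((ts n)⁻¹ • (ps' n - u)) w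
          = (ts n)⁻¹ * ‖ps' n - (u + ts n • w)‖ := by
        rw [dist_eq_norm]
        rw [show (ts n)⁻¹ • (ps' n - u) - w = (ts n)⁻¹ • (ps' n - (u + ts n • w)) from by
          match_scalars <;> field_simp]
        rw [norm_smul, Real.norm_eq_abs, abs_of_pos (by positivity)]
      rw [h5, dist_eq_norm, hslope_eq, norm_smul, Real.norm_eq_abs,
        abs_of_pos (show (0:ℝ) < (ts n)⁻¹ by positivity)]
      calc (ts n)⁻¹ * ‖ps' n - (u + ts n • w)‖ ≤ (ts n)⁻¹ * (2*K*E (ts n)) := by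
            apply mul_le_mul_of_nonneg_left (hps'b n) (by positivity)
        _ = 2*K * ((ts n)⁻¹ * ‖φ (u + ts n • w) - φ u - ts n • z‖) := by rw [hE]; ring
    have hd0 : Tendsto (fun n => 2*K * dist
        (slope (fun s : ℝ => φ (u + s • w)) 0 (ts n)) z) atTop (𝓝 0) := by
      have h6 := tendsto_iff_dist_tendsto_zero.mp hslopen
      have := h6.const_mul (2*K)
      simpa using this
    apply tendsto_iff_dist_tendsto_zero.mpr
    exact squeeze_zero (fun n => dist_nonneg) hbnd hd0
  · intro n
    have : u + ts n • (ts n)⁻¹ • (ps' n - u) = ps' n := by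
      rw [smul_smul, mul_inv_cancel₀ (hts0 n).ne', one_smul]
      abel
    rw [this]
    exact hps'A n


end ShapiroAux

theorem shapiro_of_robinson {X Y : Type*}
    [NormedAddCommGroup X] [NormedSpace ℝ X] [CompleteSpace X]
    [NormedAddCommGroup Y] [NormedSpace ℝ Y] [CompleteSpace Y]
    (φ : X → Y) (hφ : ContDiff ℝ 1 φ)
    (A : Set Y) (hAcl : IsClosed A) (hAconv : Convex ℝ A)
    (hAcone : ∀ c : ℝ, 0 < c → ∀ a ∈ A, c • a ∈ A)
    (xbar : X) (hxbar : xbar ∈ φ ⁻¹' A)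
    (hRob : (0 : Y) ∈ interior {y | ∃ u : X, ∃ a ∈ A, y = φ xbar + fderiv ℝ φ xbar u - a}) :
    shapiro (φ ⁻¹' A) xbar := by
  obtain ⟨M, ρ, hM, hρ, hcl⟩ := stepA (fderiv ℝ φ xbar) (φ xbar) A hAconv hAcone hRob
  set K : ℝ := 4*M/ρ with hKdef
  have hK : 0 < K := by positivity
  have h0A : (0:Y) ∈ A := cone_zero_mem hAcl hAcone hxbar
  -- δ₁ from continuity of the derivative
  have hcf : ContinuousAt (fderiv ℝ φ) xbar := (hφ.continuous_fderiv one_ne_zero).continuousAt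
  obtain ⟨δ₁, hδ₁, hδ₁p⟩ := Metric.continuousAt_iff.mp hcf (ρ/(16*M)) (by positivity)
  -- the homogeneous solvability estimate
  have hsolveK : ∀ p : X, dist p xbar < δ₁ → ∀ b : Y, ‖b - φ xbar‖ ≤ ρ/(16*M) → ∀ y : Y,
      ∃ w s a, ‖w‖ ≤ K*‖y‖ ∧ 0 ≤ s ∧ s ≤ K*‖y‖ ∧ a ∈ A ∧
        y = fderiv ℝ φ p w + s • b - a := by
    intro p hp b hb y
    by_cases hy : y = 0
    · subst hy
      exact ⟨0, 0, 0, by simp, le_refl 0, by simp, h0A, by simp⟩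
    · have hny : 0 < ‖y‖ := norm_pos_iff.mpr hy
      have hDp : ‖fderiv ℝ φ p - fderiv ℝ φ xbar‖ ≤ ρ/(16*M) := by
        have := hδ₁p hp
        rw [dist_eq_norm] at this
        exact this.le
      obtain ⟨w₀, s₀, a₀, hw₀, hs₀0, hs₀, ha₀, hid₀⟩ :=
        solve (fderiv ℝ φ xbar) (φ xbar) A hAcl hAconv hAcone h0A M ρ hM hρ hcl
          (fderiv ℝ φ p) b hDp hb ((ρ/(2*‖y‖)) • y) (by
            rw [norm_smul, Real.norm_eq_abs, abs_of_pos (by positivity)]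
            exact le_of_eq (by field_simp [hny.ne'] <;> ring))
      set lam : ℝ := 2*‖y‖/ρ with hlam
      have hlam0 : 0 < lam := by positivity
      have hlamK : lam * (2*M) = K * ‖y‖ := by
        rw [hlam, hKdef]; field_simp; ring
      refine ⟨lam • w₀, lam * s₀, lam • a₀, ?_, by positivity, ?_,
        hAcone _ hlam0 _ ha₀, ?_⟩
      · rw [norm_smul, Real.norm_eq_abs, abs_of_pos hlam0]
        calc lam * ‖w₀‖ ≤ lam * (2*M) := mul_le_mul_of_nonneg_left hw₀ hlam0.le
          _ = K * ‖y‖ := hlamK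
      · calc lam * s₀ ≤ lam * (2*M) := mul_le_mul_of_nonneg_left hs₀ hlam0.le
          _ = K * ‖y‖ := hlamK
      · have hyeq : y = lam • ((ρ/(2*‖y‖)) • y) := by
          rw [smul_smul, hlam]
          rw [show 2*‖y‖/ρ * (ρ/(2*‖y‖)) = 1 from by field_simp]
          rw [one_smul]
        rw [hyeq, hid₀, smul_sub, smul_add, smul_smul, ← map_smul]
  -- MVT moduli
  obtain ⟨δ₂, hδ₂, hmvt₂⟩ := mvt_unif φ hφ xbar (show (0:ℝ) < (2*K)⁻¹ by positivity)
  -- continuity of φ at xbar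
  obtain ⟨δc, hδc, hδcp⟩ := Metric.continuousAt_iff.mp hφ.continuous.continuousAt
    (ρ/(16*M)) (by positivity)
  -- main argument
  intro ε hε
  have hη : (0:ℝ) < ε/(2*(K+1)) := by positivity
  obtain ⟨δ₃, hδ₃, hmvt₃⟩ := mvt_unif φ hφ xbar hη
  refine ⟨min (min δ₃ δc) (min δ₁ δ₂ / 2), by positivity, ?_⟩
  rintro x ⟨hxA, hxb⟩ u ⟨huA, hub'⟩
  rw [mem_ball] at hxb hub'
  by_cases hxu : x = u
  · have h0b : (0:X) ∈ bouligand (φ ⁻¹' A) u :=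
      ⟨fun _ => 0, fun n => 1/(n+1), tendsto_const_nhds,
        tendsto_one_div_add_atTop_nhds_zero_nat, fun n => by positivity,
        fun n => by simpa using huA⟩
    calc infDist (x - u) (bouligand (φ ⁻¹' A) u) ≤ dist (x - u) 0 :=
          infDist_le_dist_of_mem h0b
      _ = 0 := by rw [hxu]; simp
      _ ≤ ε * ‖x - u‖ := by positivity
  · -- the correction
    set r : Y := φ x - φ u - fderiv ℝ φ u (x - u) with hrdef
    have hux : dist u xbar < δ₃ := lt_of_lt_of_le hub'
      (le_trans (min_le_left _ _) (min_le_left _ _))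
    have hxx : dist x xbar < δ₃ := lt_of_lt_of_le hxb
      (le_trans (min_le_left _ _) (min_le_left _ _))
    have hr : ‖r‖ ≤ (ε/(2*(K+1))) * ‖x - u‖ := hmvt₃ u x hux hxx
    have hud1 : dist u xbar < δ₁ := by
      have h1 : dist u xbar < min δ₁ δ₂ / 2 := lt_of_lt_of_le hub' (min_le_right _ _)
      have h2 : min δ₁ δ₂ / 2 ≤ δ₁ := by
        have := min_le_left δ₁ δ₂
        linarith [lt_min hδ₁ hδ₂]
      linarith
    have hub2 : ‖φ u - φ xbar‖ ≤ ρ/(16*M) := by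
      have := hδcp (lt_of_lt_of_le hub'
        (le_trans (min_le_left _ _) (min_le_right _ _)))
      rw [dist_eq_norm] at this
      exact this.le
    obtain ⟨w', s, a, hw'K, hs0, hsK, haA, h5⟩ := hsolveK u hud1 (φ u) hub2 r
    set wdir : X := (x - u) + w' with hwdir
    have hDw' : fderiv ℝ φ u w' = r - s • φ u + a := by rw [h5]; abel
    have hDxu : fderiv ℝ φ u (x - u) = φ x - φ u - r := by rw [hrdef]; abel
    have hzid : fderiv ℝ φ u wdir = φ x - φ u - s • φ u + a := by
      rw [hwdir, map_add, hDxu, hDw']; abel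
    have h1s : (0:ℝ) < 2*(1+s) := by linarith
    have ht₀ : (0:ℝ) < (2*(1+s))⁻¹ := inv_pos.mpr h1s
    have hz : ∀ t : ℝ, 0 < t → t ≤ (2*(1+s))⁻¹ →
        φ u + t • (fderiv ℝ φ u wdir) - (2⁻¹:ℝ) • φ u ∈ A := by
      intro t ht htle
      have hcoef : 0 ≤ 2⁻¹ - t - t*s := by
        have h7 : t * (2*(1+s)) ≤ 1 := by
          calc t*(2*(1+s)) ≤ (2*(1+s))⁻¹ * (2*(1+s)) :=
                mul_le_mul_of_nonneg_right htle h1s.le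
            _ = 1 := inv_mul_cancel₀ h1s.ne'
        nlinarith
      have heq : φ u + t • fderiv ℝ φ u wdir - (2⁻¹:ℝ) • φ u
          = (2⁻¹ - t - t*s) • φ u + t • φ x + t • a := by
        rw [hzid]; module
      rw [heq]
      exact cone_add hAconv hAcone (cone_add hAconv hAcone
        (cone_smul_nonneg h0A hAcone hcoef huA) (hAcone t ht _ hxA)) (hAcone t ht _ haA)
    have hud2 : dist u xbar < min δ₁ δ₂ / 2 := lt_of_lt_of_le hub' (min_le_right _ _)
    have hwmem : wdir ∈ bouligand (φ ⁻¹' A) u :=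
      newton φ hφ A hAcl hAconv hAcone h0A xbar K δ₁ (ρ/(16*M)) δ₂ hK hδ₁ hδ₂
        hsolveK hmvt₂ u huA hud2 hub2 wdir ((2*(1+s))⁻¹) ht₀ hz
    have hdist : dist (x - u) wdir = ‖w'‖ := by
      rw [dist_eq_norm, hwdir]
      rw [show x - u - (x - u + w') = -w' from by abel, norm_neg]
    calc infDist (x - u) (bouligand (φ ⁻¹' A) u) ≤ dist (x - u) wdir :=
          infDist_le_dist_of_mem hwmem
      _ = ‖w'‖ := hdist
      _ ≤ K * ‖r‖ := hw'K
      _ ≤ K * ((ε/(2*(K+1))) * ‖x - u‖) := by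
          apply mul_le_mul_of_nonneg_left hr hK.le
      _ ≤ ε * ‖x - u‖ := by
          have hnn : (0:ℝ) ≤ ‖x - u‖ := norm_nonneg _
          have : K * (ε/(2*(K+1))) ≤ ε := by
            rw [div_eq_mul_inv]
            have h8 : K * (ε * (2*(K+1))⁻¹) = ε * (K * (2*(K+1))⁻¹) := by ring
            rw [h8]
            have h9 : K * (2*(K+1))⁻¹ ≤ 1 := by
              rw [mul_inv_le_iff₀ (by linarith)]
              linarith
            nlinarith
          nlinarith
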